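/- arXiv:0708.1428 — 8 statements merged into one kernel-verified Lean document; each statement's English description precedes it below -/
import Mathlib

section
/- Let a, b, c : V × V → ℂ be sesquilinear mappings, let α ∈ [0,1), and assume there are constants C₁, C₂ ≥ 0 such that |b(u,v)| ≤ C₁‖u‖_V ‖v‖_V^α ‖v‖_H^{1−α} and |c(u,v)| ≤ C₂‖u‖_V^α ‖u‖_H^{1−α} ‖v‖_V for all u, v ∈ V. Then a is H-elliptic for some constants (α₀, ω₀) if and only if a + b + c is H-elliptic for some constants (α₁, ω₁). -/
lemma young_aux (α : ℝ) (hα0 : 0 ≤ α) (hα1 : α < 1) {ε : ℝ} (hε : 0 < ε) :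
    ∃ M ≥ 0, ∀ x y : ℝ, 0 ≤ x → 0 ≤ y →
      x ^ (1 + α) * y ^ (1 - α) ≤ ε * x ^ 2 + M * y ^ 2 := by
  set θ : ℝ := (1 + α) / 2 with hθdef
  have hθ : 0 < θ := by positivity
  have hθ1 : θ < 1 := by rw [hθdef]; linarith
  have h1θ : 0 < 1 - θ := by linarith
  set K : ℝ := (θ / ε) ^ (θ / (1 - θ)) with hKdef
  have hK : 0 ≤ K := Real.rpow_nonneg (by positivity) _
  refine ⟨(1 - θ) * K, by positivity, fun x y hx hy => ?_⟩
  have h := Real.geom_mean_le_arith_mean2_weighted hθ.le h1θ.le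
    (show (0:ℝ) ≤ ε / θ * x ^ 2 by positivity)
    (show (0:ℝ) ≤ K * y ^ 2 by positivity) (by ring)
  have h2a : ((2:ℕ):ℝ) * θ = 1 + α := by push_cast; rw [hθdef]; ring
  have h2b : ((2:ℕ):ℝ) * (1 - θ) = 1 - α := by push_cast; rw [hθdef]; ring
  have e1 : (ε / θ * x ^ 2) ^ θ = (ε / θ) ^ θ * x ^ (1 + α) := by
    rw [Real.mul_rpow (by positivity) (by positivity), ← Real.rpow_natCast x 2,
      ← Real.rpow_mul hx, h2a]
  have e2 : (K * y ^ 2) ^ (1 - θ) = (θ / ε) ^ θ * y ^ (1 - α) := by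
    rw [Real.mul_rpow hK (by positivity), ← Real.rpow_natCast y 2,
      ← Real.rpow_mul hy, hKdef, ← Real.rpow_mul (by positivity),
      div_mul_cancel₀ θ h1θ.ne', h2b]
  have e3 : (ε / θ) ^ θ * (θ / ε) ^ θ = 1 := by
    rw [← Real.mul_rpow (by positivity) (by positivity),
      div_mul_div_comm, mul_comm ε θ, div_self (by positivity), Real.one_rpow]
  calc x ^ (1 + α) * y ^ (1 - α)
      = (ε / θ * x ^ 2) ^ θ * (K * y ^ 2) ^ (1 - θ) := by
        rw [e1, e2, mul_mul_mul_comm, e3, one_mul]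
    _ ≤ θ * (ε / θ * x ^ 2) + (1 - θ) * (K * y ^ 2) := h
    _ = ε * x ^ 2 + (1 - θ) * K * y ^ 2 := by field_simp

/-- perturbation lemma. If `b` is continuous on `V × H_α` and `c` on
`H_α × V` (expressed through interpolation-type estimates with exponent `α ∈ [0,1)`),
then `a` is `H`-elliptic (for some constants) iff `a + b + c` is `H`-elliptic
(for some constants). -/
theorem stmt1 {V H : Type*}
    [NormedAddCommGroup V] [InnerProductSpace ℂ V] [CompleteSpace V]
    [NormedAddCommGroup H] [InnerProductSpace ℂ H] [CompleteSpace H]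
    (J : V →L[ℂ] H) (hJinj : Function.Injective J) (hJdense : DenseRange J)
    (a b c : V →ₗ[ℂ] V →ₛₗ[starRingEnd ℂ] ℂ)
    (α : ℝ) (hα0 : 0 ≤ α) (hα1 : α < 1)
    (C₁ C₂ : ℝ) (hC₁ : 0 ≤ C₁) (hC₂ : 0 ≤ C₂)
    (hb : ∀ u v : V, ‖b u v‖ ≤ C₁ * ‖u‖ * ‖v‖ ^ α * ‖J v‖ ^ (1 - α))
    (hc : ∀ u v : V, ‖c u v‖ ≤ C₂ * ‖u‖ ^ α * ‖J u‖ ^ (1 - α) * ‖v‖) :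
    (∃ α₀ > 0, ∃ ω₀ ≥ 0, ∀ u : V, α₀ * ‖u‖ ^ 2 - ω₀ * ‖J u‖ ^ 2 ≤ (a u u).re) ↔
      (∃ α₁ > 0, ∃ ω₁ ≥ 0, ∀ u : V,
        α₁ * ‖u‖ ^ 2 - ω₁ * ‖J u‖ ^ 2 ≤ (a u u + b u u + c u u).re) := by
  -- combined bound on the perturbation
  have hbc : ∀ u : V, |(b u u).re + (c u u).re| ≤
      (C₁ + C₂) * (‖u‖ ^ (1 + α) * ‖J u‖ ^ (1 - α)) := by
    intro u
    have hpow : ‖u‖ * ‖u‖ ^ α = ‖u‖ ^ (1 + α) := by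
      rw [Real.rpow_add' (norm_nonneg u) (by positivity), Real.rpow_one]
    have h1 : |(b u u).re| ≤ C₁ * (‖u‖ ^ (1 + α) * ‖J u‖ ^ (1 - α)) := by
      refine le_trans (Complex.abs_re_le_norm _) (le_trans (hb u u) ?_)
      rw [mul_assoc C₁, hpow, mul_assoc]
    have h2 : |(c u u).re| ≤ C₂ * (‖u‖ ^ (1 + α) * ‖J u‖ ^ (1 - α)) := by
      refine le_trans (Complex.abs_re_le_norm _) (le_trans (hc u u) ?_)
      have : C₂ * ‖u‖ ^ α * ‖J u‖ ^ (1 - α) * ‖u‖ =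
          C₂ * ((‖u‖ * ‖u‖ ^ α) * ‖J u‖ ^ (1 - α)) := by ring
      rw [this, hpow]
    calc |(b u u).re + (c u u).re| ≤ |(b u u).re| + |(c u u).re| := abs_add_le _ _
      _ ≤ (C₁ + C₂) * (‖u‖ ^ (1 + α) * ‖J u‖ ^ (1 - α)) := by linarith
  have key : ∀ ε > 0, ∃ M ≥ 0, ∀ u : V,
      |(b u u).re + (c u u).re| ≤ ε * ‖u‖ ^ 2 + M * ‖J u‖ ^ 2 := by
    intro ε hε
    have hε' : 0 < ε / (C₁ + C₂ + 1) := by positivity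
    obtain ⟨M, hM, hMle⟩ := young_aux α hα0 hα1 hε'
    refine ⟨(C₁ + C₂ + 1) * M, by positivity, fun u => ?_⟩
    have h1 := hMle ‖u‖ ‖J u‖ (norm_nonneg _) (norm_nonneg _)
    have h2 := hbc u
    have h3 : (C₁ + C₂) * (‖u‖ ^ (1 + α) * ‖J u‖ ^ (1 - α)) ≤
        (C₁ + C₂ + 1) * (‖u‖ ^ (1 + α) * ‖J u‖ ^ (1 - α)) := by
      have : 0 ≤ ‖u‖ ^ (1 + α) * ‖J u‖ ^ (1 - α) := by positivity
      nlinarith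
    have h4 : (C₁ + C₂ + 1) * (‖u‖ ^ (1 + α) * ‖J u‖ ^ (1 - α)) ≤
        ε * ‖u‖ ^ 2 + (C₁ + C₂ + 1) * M * ‖J u‖ ^ 2 := by
      have hpos : (0:ℝ) < C₁ + C₂ + 1 := by positivity
      calc (C₁ + C₂ + 1) * (‖u‖ ^ (1 + α) * ‖J u‖ ^ (1 - α))
          ≤ (C₁ + C₂ + 1) * (ε / (C₁ + C₂ + 1) * ‖u‖ ^ 2 + M * ‖J u‖ ^ 2) := by
            exact mul_le_mul_of_nonneg_left h1 hpos.le
        _ = ε * ‖u‖ ^ 2 + (C₁ + C₂ + 1) * M * ‖J u‖ ^ 2 := by field_simp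
    linarith
  constructor
  · rintro ⟨α₀, hα₀, ω₀, hω₀, hell⟩
    obtain ⟨M, hM, hMle⟩ := key (α₀ / 2) (by positivity)
    refine ⟨α₀ / 2, by positivity, ω₀ + M, by positivity, fun u => ?_⟩
    have h1 := hell u
    have h2 := hMle u
    rw [Complex.add_re, Complex.add_re]
    have := abs_le.mp h2
    linarith
  · rintro ⟨α₁, hα₁, ω₁, hω₁, hell⟩
    obtain ⟨M, hM, hMle⟩ := key (α₁ / 2) (by positivity)
    refine ⟨α₁ / 2, by positivity, ω₁ + M, by positivity, fun u => ?_⟩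
    have h1 := hell u
    have h2 := hMle u
    rw [Complex.add_re, Complex.add_re] at h1
    have := abs_le.mp h2
    linarith
end

section
/- Assume that for each i the diagonal form a_{ii} is continuous with constant M_{ii} ≥ 0 (i.e., |a_{ii}(u,v)| ≤ M_{ii}‖u‖_{V_i}‖v‖_{V_i}), and that for each i ≠ j there are constants α_{ij} ≤ 0 and ω_{ij} ∈ ℝ with |a_{ij}(f,g)| ≤ −α_{ij}‖f‖_{V_j}‖g‖_{V_i} + ω_{ij}‖f‖_{H_j}‖g‖_{H_i} for all f ∈ V_j, g ∈ V_i. Let 𝐌 be the real m×m matrix with diagonal entries M_{ii} and off-diagonal entries −α_{ij}, and let 𝛀₀ be the real m×m matrix with zero diagonal and off-diagonal entries |ω_{ij}|, both with operator norm ‖·‖ taken with respect to the Euclidean norm. Let 𝔢 ≥ 0 satisfy ‖𝔣‖_ℋ ≤ 𝔢‖𝔣‖_𝒱 for all 𝔣 ∈ 𝒱. Then |𝔞(𝔣,𝔤)| ≤ (‖𝐌‖ + ‖𝛀₀‖𝔢²)‖𝔣‖_𝒱‖𝔤‖_𝒱 for all 𝔣, 𝔤 ∈ 𝒱. -/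
open Finset

lemma key_ineq {m : ℕ} (A : Matrix (Fin m) (Fin m) ℝ) (x y : Fin m → ℝ) :
    ∑ i, ∑ j, A i j * x j * y i ≤
      ‖Matrix.toEuclideanCLM (𝕜 := ℝ) A‖ *
        (Real.sqrt (∑ i, x i ^ 2) * Real.sqrt (∑ i, y i ^ 2)) := by
  set x' : EuclideanSpace ℝ (Fin m) := (WithLp.equiv 2 _).symm x with hx'
  set y' : EuclideanSpace ℝ (Fin m) := (WithLp.equiv 2 _).symm y with hy'
  have hxn : ‖x'‖ = Real.sqrt (∑ i, x i ^ 2) := by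
    rw [EuclideanSpace.norm_eq]
    congr 1
    exact Finset.sum_congr rfl fun i _ => by rw [Real.norm_eq_abs, sq_abs]; rfl
  have hyn : ‖y'‖ = Real.sqrt (∑ i, y i ^ 2) := by
    rw [EuclideanSpace.norm_eq]
    congr 1
    exact Finset.sum_congr rfl fun i _ => by rw [Real.norm_eq_abs, sq_abs]; rfl
  have h1 : ∑ i, ∑ j, A i j * x j * y i =
      inner ℝ (Matrix.toEuclideanCLM (𝕜 := ℝ) A x') y' := by
    rw [PiLp.inner_apply]
    simp only [RCLike.inner_apply, starRingEnd_apply, star_trivial]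
    refine Finset.sum_congr rfl fun i _ => ?_
    have h2 : (Matrix.toEuclideanCLM (𝕜 := ℝ) A x') i = ∑ j, A i j * x j := by
      show (Matrix.toEuclideanCLM (𝕜 := ℝ) A (WithLp.toLp 2 x)) i = _
      rw [Matrix.toEuclideanCLM_toLp]
      show A.mulVec x i = _
      simp [Matrix.mulVec, dotProduct]
    rw [h2, Finset.mul_sum]
    exact Finset.sum_congr rfl fun j _ => mul_comm _ _
  rw [h1, ← hxn, ← hyn]
  calc inner ℝ (Matrix.toEuclideanCLM (𝕜 := ℝ) A x') y'
      ≤ ‖Matrix.toEuclideanCLM (𝕜 := ℝ) A x'‖ * ‖y'‖ := real_inner_le_norm _ _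
    _ ≤ (‖Matrix.toEuclideanCLM (𝕜 := ℝ) A‖ * ‖x'‖) * ‖y'‖ :=
        mul_le_mul_of_nonneg_right ((Matrix.toEuclideanCLM (𝕜 := ℝ) A).le_opNorm x')
          (norm_nonneg _)
    _ = _ := by ring

/-- continuity estimate for the form matrix. With diagonal forms continuous
with constants `M i` and off-diagonal forms satisfying
`|a i j (f,g)| ≤ -α i j ‖f‖_{V j} ‖g‖_{V i} + ω i j ‖f‖_{H j} ‖g‖_{H i}` (`α i j ≤ 0`),
one has `|𝔞(𝔣,𝔤)| ≤ (‖𝐌‖ + ‖𝛀₀‖ 𝔢²) ‖𝔣‖_𝒱 ‖𝔤‖_𝒱`, where `𝐌` has diagonal `M i` and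
off-diagonal `-α i j`, `𝛀₀` has zero diagonal and off-diagonal `|ω i j|`, and `𝔢` bounds the
embedding `𝒱 ↪ ℋ`. -/
theorem stmt3 {m : ℕ} (hm : 1 ≤ m)
    (H V : Fin m → Type*)
    [∀ i, NormedAddCommGroup (H i)] [∀ i, InnerProductSpace ℂ (H i)] [∀ i, CompleteSpace (H i)]
    [∀ i, NormedAddCommGroup (V i)] [∀ i, InnerProductSpace ℂ (V i)] [∀ i, CompleteSpace (V i)]
    (J : ∀ i, V i →L[ℂ] H i)
    (hJinj : ∀ i, Function.Injective (J i)) (hJdense : ∀ i, DenseRange (J i))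
    (a : ∀ i j, V j →ₗ[ℂ] V i →ₛₗ[starRingEnd ℂ] ℂ)
    (M : Fin m → ℝ) (hM : ∀ i, 0 ≤ M i)
    (hdiag : ∀ i (u v : V i), ‖a i i u v‖ ≤ M i * ‖u‖ * ‖v‖)
    (αm ωm : Fin m → Fin m → ℝ)
    (hαm : ∀ i j, i ≠ j → αm i j ≤ 0)
    (hoff : ∀ i j, i ≠ j → ∀ (f : V j) (g : V i),
      ‖a i j f g‖ ≤ -(αm i j) * ‖f‖ * ‖g‖ + ωm i j * ‖J j f‖ * ‖J i g‖)
    (e : ℝ) (he : 0 ≤ e)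
    (hemb : ∀ f : ∀ i, V i,
      Real.sqrt (∑ i, ‖J i (f i)‖ ^ 2) ≤ e * Real.sqrt (∑ i, ‖f i‖ ^ 2)) :
    ∀ f g : ∀ i, V i,
      ‖∑ i, ∑ j, a i j (f j) (g i)‖ ≤
        (‖Matrix.toEuclideanCLM (𝕜 := ℝ)
            (Matrix.of fun i j => if i = j then M i else -(αm i j))‖ +
          ‖Matrix.toEuclideanCLM (𝕜 := ℝ)
            (Matrix.of fun i j => if i = j then 0 else |ωm i j|)‖ * e ^ 2) *
          (Real.sqrt (∑ i, ‖f i‖ ^ 2) * Real.sqrt (∑ i, ‖g i‖ ^ 2)) := by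
  intro f g
  set Amat : Matrix (Fin m) (Fin m) ℝ :=
    Matrix.of fun i j => if i = j then M i else -(αm i j) with hAmat
  set Bmat : Matrix (Fin m) (Fin m) ℝ :=
    Matrix.of fun i j => if i = j then 0 else |ωm i j| with hBmat
  set Sf := Real.sqrt (∑ i, ‖f i‖ ^ 2) with hSf
  set Sg := Real.sqrt (∑ i, ‖g i‖ ^ 2) with hSg
  have hSf0 : 0 ≤ Sf := Real.sqrt_nonneg _
  have hSg0 : 0 ≤ Sg := Real.sqrt_nonneg _
  have entry : ∀ i j, ‖a i j (f j) (g i)‖ ≤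
      Amat i j * ‖f j‖ * ‖g i‖ + Bmat i j * ‖J j (f j)‖ * ‖J i (g i)‖ := by
    intro i j
    rcases eq_or_ne i j with rfl | hij
    · have : Amat i i = M i := by simp [hAmat]
      have hB : Bmat i i = 0 := by simp [hBmat]
      rw [this, hB]
      simpa using hdiag i (f i) (g i)
    · have hA : Amat i j = -(αm i j) := by simp [hAmat, hij]
      have hB : Bmat i j = |ωm i j| := by simp [hBmat, hij]
      rw [hA, hB]
      refine (hoff i j hij (f j) (g i)).trans ?_
      have : ωm i j * ‖J j (f j)‖ * ‖J i (g i)‖ ≤ |ωm i j| * ‖J j (f j)‖ * ‖J i (g i)‖ := by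
        exact mul_le_mul_of_nonneg_right
          (mul_le_mul_of_nonneg_right (le_abs_self _) (norm_nonneg _)) (norm_nonneg _)
      linarith
  have step1 : ‖∑ i, ∑ j, a i j (f j) (g i)‖ ≤
      ∑ i, ∑ j, (Amat i j * ‖f j‖ * ‖g i‖ + Bmat i j * ‖J j (f j)‖ * ‖J i (g i)‖) := by
    refine (norm_sum_le _ _).trans ?_
    refine Finset.sum_le_sum fun i _ => ?_
    exact (norm_sum_le _ _).trans (Finset.sum_le_sum fun j _ => entry i j)
  have split : ∑ i, ∑ j, (Amat i j * ‖f j‖ * ‖g i‖ + Bmat i j * ‖J j (f j)‖ * ‖J i (g i)‖)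
      = (∑ i, ∑ j, Amat i j * ‖f j‖ * ‖g i‖)
        + ∑ i, ∑ j, Bmat i j * ‖J j (f j)‖ * ‖J i (g i)‖ := by
    rw [← Finset.sum_add_distrib]
    exact Finset.sum_congr rfl fun i _ => Finset.sum_add_distrib
  have boundA : ∑ i, ∑ j, Amat i j * ‖f j‖ * ‖g i‖ ≤
      ‖Matrix.toEuclideanCLM (𝕜 := ℝ) Amat‖ * (Sf * Sg) :=
    key_ineq Amat (fun j => ‖f j‖) (fun i => ‖g i‖)
  have boundB : ∑ i, ∑ j, Bmat i j * ‖J j (f j)‖ * ‖J i (g i)‖ ≤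
      ‖Matrix.toEuclideanCLM (𝕜 := ℝ) Bmat‖ * (e ^ 2 * (Sf * Sg)) := by
    refine (key_ineq Bmat (fun j => ‖J j (f j)‖) (fun i => ‖J i (g i)‖)).trans ?_
    refine mul_le_mul_of_nonneg_left ?_ (norm_nonneg _)
    have h1 := hemb f
    have h2 := hemb g
    calc Real.sqrt (∑ i, ‖J i (f i)‖ ^ 2) * Real.sqrt (∑ i, ‖J i (g i)‖ ^ 2)
        ≤ (e * Sf) * (e * Sg) := by
          exact mul_le_mul h1 h2 (Real.sqrt_nonneg _) (by positivity)
      _ = e ^ 2 * (Sf * Sg) := by ring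
  calc ‖∑ i, ∑ j, a i j (f j) (g i)‖
      ≤ (∑ i, ∑ j, Amat i j * ‖f j‖ * ‖g i‖)
        + ∑ i, ∑ j, Bmat i j * ‖J j (f j)‖ * ‖J i (g i)‖ := by rw [← split]; exact step1
    _ ≤ ‖Matrix.toEuclideanCLM (𝕜 := ℝ) Amat‖ * (Sf * Sg)
        + ‖Matrix.toEuclideanCLM (𝕜 := ℝ) Bmat‖ * (e ^ 2 * (Sf * Sg)) :=
        add_le_add boundA boundB
    _ = (‖Matrix.toEuclideanCLM (𝕜 := ℝ) Amat‖
        + ‖Matrix.toEuclideanCLM (𝕜 := ℝ) Bmat‖ * e ^ 2) * (Sf * Sg) := by ring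
end

section
/- Assume each diagonal form a_{ii} is H_i-elliptic with constants (α_{ii}, ω_{ii}), i.e., Re a_{ii}(f,f) ≥ α_{ii}‖f‖_{V_i}² − ω_{ii}‖f‖_{H_i}², and that for each i ≠ j there are constants α_{ij} ≤ 0 and ω_{ij} ∈ ℝ with |a_{ij}(f,g)| ≤ −α_{ij}‖f‖_{V_j}‖g‖_{V_i} + ω_{ij}‖f‖_{H_j}‖g‖_{H_i} for all f ∈ V_j, g ∈ V_i. Let 𝐀 = (α_{ij})_{1≤i,j≤m} and 𝛀 = (ω_{ij})_{1≤i,j≤m}, and assume 𝐀 is positive definite with constant α > 0, i.e., Re⟨𝐀ξ, ξ⟩ ≥ α|ξ|² for all ξ ∈ ℂ^m. Then 𝔞 is ℋ-elliptic with constants (α, ‖𝛀‖): Re 𝔞(𝔣,𝔣) ≥ α‖𝔣‖_𝒱² − ‖𝛀‖‖𝔣‖_ℋ² for all 𝔣 ∈ 𝒱, where ‖𝛀‖ is the operator norm of 𝛀 with respect to the Euclidean norm. -/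
open Finset

lemma omega_bound {m : ℕ} (Ω : Matrix (Fin m) (Fin m) ℝ) (η : Fin m → ℝ) :
    ∑ i, ∑ j, Ω i j * η j * η i ≤
      ‖Matrix.toEuclideanCLM (𝕜 := ℝ) Ω‖ * ∑ i, η i ^ 2 := by
  set T := Matrix.toEuclideanCLM (𝕜 := ℝ) Ω
  set x : EuclideanSpace ℝ (Fin m) := (WithLp.equiv _ _).symm η
  have hx : ∀ i, x i = η i := fun i => rfl
  have hTx : ∀ i, (T x) i = ∑ j, Ω i j * η j := by
    intro i
    have : T x = (WithLp.equiv _ _).symm (Matrix.toLin' Ω η) := by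
      simp [T, x]
    rw [this]
    simp [Matrix.toLin'_apply, Matrix.mulVec, dotProduct]
  have hinner : (inner ℝ (T x) x : ℝ) = ∑ i, ∑ j, Ω i j * η j * η i := by
    rw [PiLp.inner_apply]
    refine Finset.sum_congr rfl fun i _ => ?_
    simp only [RCLike.inner_apply, starRingEnd_apply, star_trivial, hTx, hx,
      Finset.sum_mul, Finset.mul_sum, mul_comm]
  have hxx : ‖x‖ ^ 2 = ∑ i, η i ^ 2 := by
    rw [← real_inner_self_eq_norm_sq, PiLp.inner_apply]
    refine Finset.sum_congr rfl fun i _ => ?_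
    simp [RCLike.inner_apply, hx, sq]
  calc ∑ i, ∑ j, Ω i j * η j * η i = (inner ℝ (T x) x : ℝ) := hinner.symm
    _ ≤ ‖T x‖ * ‖x‖ := real_inner_le_norm _ _
    _ ≤ (‖T‖ * ‖x‖) * ‖x‖ := by
        gcongr
        exact T.le_opNorm x
    _ = ‖T‖ * ‖x‖ ^ 2 := by ring
    _ = ‖T‖ * ∑ i, η i ^ 2 := by rw [hxx]

/-- If each `a i i` is `H i`-elliptic with constants `(A i i, Ω i i)`,
the off-diagonal entries satisfy `|a i j (f,g)| ≤ -(A i j)‖f‖_{V j}‖g‖_{V i} +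
Ω i j ‖f‖_{H j}‖g‖_{H i}` with `A i j ≤ 0`, and the matrix `𝐀 = (A i j)` is positive
definite with constant `α > 0`, then `𝔞` is `ℋ`-elliptic with constants `(α, ‖𝛀‖)`. -/
theorem stmt6 {m : ℕ} (hm : 1 ≤ m)
    (H V : Fin m → Type*)
    [∀ i, NormedAddCommGroup (H i)] [∀ i, InnerProductSpace ℂ (H i)] [∀ i, CompleteSpace (H i)]
    [∀ i, NormedAddCommGroup (V i)] [∀ i, InnerProductSpace ℂ (V i)] [∀ i, CompleteSpace (V i)]
    (J : ∀ i, V i →L[ℂ] H i)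
    (hJinj : ∀ i, Function.Injective (J i)) (hJdense : ∀ i, DenseRange (J i))
    (a : ∀ i j, V j →ₗ[ℂ] V i →ₛₗ[starRingEnd ℂ] ℂ)
    (A Ω : Matrix (Fin m) (Fin m) ℝ)
    (hAdiag : ∀ i, 0 < A i i) (hΩdiag : ∀ i, 0 ≤ Ω i i)
    (hdiag : ∀ i (f : V i),
      A i i * ‖f‖ ^ 2 - Ω i i * ‖J i f‖ ^ 2 ≤ (a i i f f).re)
    (hAoff : ∀ i j, i ≠ j → A i j ≤ 0)
    (hoff : ∀ i j, i ≠ j → ∀ (f : V j) (g : V i),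
      ‖a i j f g‖ ≤ -(A i j) * ‖f‖ * ‖g‖ + Ω i j * ‖J j f‖ * ‖J i g‖)
    (α : ℝ) (hα : 0 < α)
    (hposdef : ∀ ξ : Fin m → ℂ,
      α * ∑ i, ‖ξ i‖ ^ 2 ≤
        (∑ i, (∑ j, (A i j : ℂ) * ξ j) * (starRingEnd ℂ) (ξ i)).re) :
    ∀ f : ∀ i, V i,
      α * (∑ i, ‖f i‖ ^ 2) -
          ‖Matrix.toEuclideanCLM (𝕜 := ℝ) Ω‖ * (∑ i, ‖J i (f i)‖ ^ 2) ≤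
        (∑ i, ∑ j, a i j (f j) (f i)).re := by
  intro f
  -- termwise lower bound
  have h1 : ∀ i j, A i j * ‖f j‖ * ‖f i‖ - Ω i j * ‖J j (f j)‖ * ‖J i (f i)‖ ≤
      (a i j (f j) (f i)).re := by
    intro i j
    by_cases hij : i = j
    · subst hij
      have := hdiag i (f i)
      nlinarith [this]
    · have habs := hoff i j hij (f j) (f i)
      have h2 : -(‖a i j (f j) (f i)‖) ≤ (a i j (f j) (f i)).re := by
        have := Complex.abs_re_le_norm (a i j (f j) (f i))
        have := neg_abs_le (a i j (f j) (f i)).re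
        linarith [abs_le.mp (le_refl |(a i j (f j) (f i)).re|)]
      linarith
  have hsum : ∑ i, ∑ j, (A i j * ‖f j‖ * ‖f i‖ - Ω i j * ‖J j (f j)‖ * ‖J i (f i)‖) ≤
      (∑ i, ∑ j, a i j (f j) (f i)).re := by
    rw [Complex.re_sum]
    refine Finset.sum_le_sum fun i _ => ?_
    rw [Complex.re_sum]
    exact Finset.sum_le_sum fun j _ => h1 i j
  -- positive definiteness gives the A-part bound
  have hA : α * (∑ i, ‖f i‖ ^ 2) ≤ ∑ i, ∑ j, A i j * ‖f j‖ * ‖f i‖ := by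
    have := hposdef (fun i => (‖f i‖ : ℂ))
    simp only [Complex.norm_real, norm_norm, Complex.conj_ofReal,
      ← Complex.ofReal_mul, ← Complex.ofReal_sum, Complex.ofReal_re] at this
    calc α * (∑ i, ‖f i‖ ^ 2) ≤ ∑ i, (∑ j, A i j * ‖f j‖) * ‖f i‖ := this
      _ = ∑ i, ∑ j, A i j * ‖f j‖ * ‖f i‖ := by
          refine Finset.sum_congr rfl fun i _ => ?_
          rw [Finset.sum_mul]
  -- operator norm bound for the Ω-part
  have hΩ : ∑ i, ∑ j, Ω i j * ‖J j (f j)‖ * ‖J i (f i)‖ ≤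
      ‖Matrix.toEuclideanCLM (𝕜 := ℝ) Ω‖ * (∑ i, ‖J i (f i)‖ ^ 2) :=
    omega_bound Ω (fun i => ‖J i (f i)‖)
  have hsplit : ∑ i, ∑ j, (A i j * ‖f j‖ * ‖f i‖ - Ω i j * ‖J j (f j)‖ * ‖J i (f i)‖) =
      (∑ i, ∑ j, A i j * ‖f j‖ * ‖f i‖) -
        ∑ i, ∑ j, Ω i j * ‖J j (f j)‖ * ‖J i (f i)‖ := by
    rw [← Finset.sum_sub_distrib]
    exact Finset.sum_congr rfl fun i _ => by rw [← Finset.sum_sub_distrib]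
  linarith
end

section
/- Assume each diagonal form a_{ii} is accretive (Re a_{ii}(f,f) ≥ 0 for all f ∈ V_i), and that for each i ≠ j there are constants α_{ij} ≤ 0 and ω_{ij} ∈ ℝ with |a_{ij}(f,g)| ≤ −α_{ij}‖f‖_{V_j}‖g‖_{V_i} + ω_{ij}‖f‖_{H_j}‖g‖_{H_i} for all f ∈ V_j, g ∈ V_i. Let 𝐀₀ be the m×m matrix with zero diagonal and off-diagonal entries α_{ij}, and 𝛀₀ the m×m matrix with zero diagonal and off-diagonal entries ω_{ij}. If Re⟨𝐀₀ξ, ξ⟩ ≥ 0 and Re⟨𝛀₀ξ, ξ⟩ ≤ 0 for all ξ ∈ ℂ^m, then 𝔞 is accretive, i.e., Re 𝔞(𝔣,𝔣) ≥ 0 for all 𝔣 ∈ 𝒱. -/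
open Finset

/-- If each diagonal form `a i i` is accretive, the off-diagonal entries
satisfy `|a i j (f,g)| ≤ -(α i j)‖f‖_{V j}‖g‖_{V i} + ω i j ‖f‖_{H j}‖g‖_{H i}` with
`α i j ≤ 0`, and the off-diagonal matrices `𝐀₀ = (α i j)` and `𝛀₀ = (ω i j)` (zero diagonal)
are positive resp. negative semidefinite, then the form matrix `𝔞` is accretive. -/
theorem stmt8 {m : ℕ} (hm : 1 ≤ m)
    (H V : Fin m → Type*)
    [∀ i, NormedAddCommGroup (H i)] [∀ i, InnerProductSpace ℂ (H i)] [∀ i, CompleteSpace (H i)]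
    [∀ i, NormedAddCommGroup (V i)] [∀ i, InnerProductSpace ℂ (V i)] [∀ i, CompleteSpace (V i)]
    (J : ∀ i, V i →L[ℂ] H i)
    (hJinj : ∀ i, Function.Injective (J i)) (hJdense : ∀ i, DenseRange (J i))
    (a : ∀ i j, V j →ₗ[ℂ] V i →ₛₗ[starRingEnd ℂ] ℂ)
    (hacc : ∀ i (f : V i), 0 ≤ (a i i f f).re)
    (αm ωm : Fin m → Fin m → ℝ)
    (hαm : ∀ i j, i ≠ j → αm i j ≤ 0)
    (hoff : ∀ i j, i ≠ j → ∀ (f : V j) (g : V i),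
      ‖a i j f g‖ ≤ -(αm i j) * ‖f‖ * ‖g‖ + ωm i j * ‖J j f‖ * ‖J i g‖)
    (hA₀ : ∀ ξ : Fin m → ℂ,
      0 ≤ (∑ i, (∑ j, ((if i = j then 0 else αm i j : ℝ) : ℂ) * ξ j) *
        (starRingEnd ℂ) (ξ i)).re)
    (hΩ₀ : ∀ ξ : Fin m → ℂ,
      (∑ i, (∑ j, ((if i = j then 0 else ωm i j : ℝ) : ℂ) * ξ j) *
        (starRingEnd ℂ) (ξ i)).re ≤ 0) :
    ∀ f : ∀ i, V i, 0 ≤ (∑ i, ∑ j, a i j (f j) (f i)).re := by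

  intro f
  set SA : ℝ := ∑ i, ∑ j, (if i = j then (0:ℝ) else αm i j) * ‖f j‖ * ‖f i‖ with hSAdef
  set SO : ℝ := ∑ i, ∑ j, (if i = j then (0:ℝ) else ωm i j) * ‖J j (f j)‖ * ‖J i (f i)‖ with hSOdef
  have hSA : 0 ≤ SA := by
    have h := hA₀ (fun i => (‖f i‖ : ℂ))
    have heq : (∑ i, (∑ j, ((if i = j then 0 else αm i j : ℝ) : ℂ) * ((‖f j‖ : ℝ) : ℂ)) *
        (starRingEnd ℂ) ((‖f i‖ : ℝ) : ℂ)) = ((SA : ℝ) : ℂ) := by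
      rw [hSAdef]
      push_cast [Complex.conj_ofReal, Finset.sum_mul]
      ring_nf
    rw [heq] at h
    simpa using h
  have hSO : SO ≤ 0 := by
    have h := hΩ₀ (fun i => (‖J i (f i)‖ : ℂ))
    have heq : (∑ i, (∑ j, ((if i = j then 0 else ωm i j : ℝ) : ℂ) * ((‖J j (f j)‖ : ℝ) : ℂ)) *
        (starRingEnd ℂ) ((‖J i (f i)‖ : ℝ) : ℂ)) = ((SO : ℝ) : ℂ) := by
      rw [hSOdef]
      push_cast [Complex.conj_ofReal, Finset.sum_mul]
      ring_nf
    rw [heq] at h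
    simpa using h
  have hterm : ∀ i j, (if i = j then (0:ℝ) else αm i j) * ‖f j‖ * ‖f i‖
      - (if i = j then (0:ℝ) else ωm i j) * ‖J j (f j)‖ * ‖J i (f i)‖
      ≤ (a i j (f j) (f i)).re := by
    intro i j
    by_cases h : i = j
    · subst h; simpa using hacc i (f i)
    · simp only [if_neg h]
      have h1 := hoff i j h (f j) (f i)
      have h2 : |(a i j (f j) (f i)).re| ≤ ‖a i j (f j) (f i)‖ :=
        Complex.abs_re_le_norm _
      have h3 := neg_abs_le ((a i j (f j) (f i)).re)
      linarith
  have hsum : SA - SO ≤ (∑ i, ∑ j, a i j (f j) (f i)).re := by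
    rw [Complex.re_sum]
    simp only [Complex.re_sum]
    rw [hSAdef, hSOdef, ← Finset.sum_sub_distrib]
    refine Finset.sum_le_sum fun i _ => ?_
    rw [← Finset.sum_sub_distrib]
    exact Finset.sum_le_sum fun j _ => hterm i j
  linarith
end

section
/- Assume there exists M ≥ 0 such that (i) |Im a_{ii}(f,f)| ≤ M‖f‖_{V_i}‖f‖_{H_i} for all f ∈ V_i and all i = 1,…,m, and (ii) either |Im(a_{ij}(f,g) + a_{ji}(g,f))| ≤ M‖f‖_{V_j}‖g‖_{H_i} for all i < j and all f ∈ V_j, g ∈ V_i, or |Im(a_{ij}(f,g) + a_{ji}(g,f))| ≤ M‖f‖_{H_j}‖g‖_{V_i} for all i < j and all f ∈ V_j, g ∈ V_i. Then there exists a constant M̃ ≥ 0 such that |Im 𝔞(𝔣,𝔣)| ≤ M̃‖𝔣‖_𝒱‖𝔣‖_ℋ for all 𝔣 ∈ 𝒱. -/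
open Finset

lemma my_sum_split {m : ℕ} (c : Fin m → Fin m → ℂ) :
    ∑ i, ∑ j, c i j = ∑ i, c i i + ∑ i, ∑ j ∈ Finset.Ioi i, (c i j + c j i) := by
  have huniv : ∀ i : Fin m, (univ : Finset (Fin m)) = Iio i ∪ Ici i := by
    intro i; ext j; simp [lt_or_ge]
  have hdisj : ∀ i : Fin m, Disjoint (Iio i) (Ici i) := by
    intro i; simp [Finset.disjoint_left]
  have h1 : ∀ i : Fin m, ∑ j, c i j = (∑ j ∈ Iio i, c i j) + c i i + ∑ j ∈ Ioi i, c i j := by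
    intro i
    rw [huniv i, Finset.sum_union (hdisj i), Ici_eq_cons_Ioi, Finset.sum_cons, add_assoc]
  have h2 : ∑ i, ∑ j ∈ Iio i, c i j = ∑ i, ∑ j ∈ Ioi i, c j i := by
    apply Finset.sum_comm'
    intro x y; simp [and_comm]
  simp only [h1, Finset.sum_add_distrib, h2]
  ring

/-- Crouzeix–Haase-type estimate on the numerical range. If the imaginary
parts of the diagonal entries satisfy `|Im a i i (f,f)| ≤ M ‖f‖_{V i} ‖f‖_{H i}`, and for all
`i < j` the symmetrized off-diagonal imaginary parts satisfy one of the two mixed estimates,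
then `|Im 𝔞(𝔣,𝔣)| ≤ M̃ ‖𝔣‖_𝒱 ‖𝔣‖_ℋ` for some `M̃ ≥ 0`. -/
theorem stmt10 {m : ℕ} (hm : 1 ≤ m)
    (H V : Fin m → Type*)
    [∀ i, NormedAddCommGroup (H i)] [∀ i, InnerProductSpace ℂ (H i)] [∀ i, CompleteSpace (H i)]
    [∀ i, NormedAddCommGroup (V i)] [∀ i, InnerProductSpace ℂ (V i)] [∀ i, CompleteSpace (V i)]
    (J : ∀ i, V i →L[ℂ] H i)
    (hJinj : ∀ i, Function.Injective (J i)) (hJdense : ∀ i, DenseRange (J i))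
    (a : ∀ i j, V j →ₗ[ℂ] V i →ₛₗ[starRingEnd ℂ] ℂ)
    (M : ℝ) (hM : 0 ≤ M)
    (hdiag : ∀ i (f : V i), |(a i i f f).im| ≤ M * ‖f‖ * ‖J i f‖)
    (hoff :
      (∀ i j : Fin m, i < j → ∀ (f : V j) (g : V i),
        |(a i j f g + a j i g f).im| ≤ M * ‖f‖ * ‖J i g‖) ∨
      (∀ i j : Fin m, i < j → ∀ (f : V j) (g : V i),
        |(a i j f g + a j i g f).im| ≤ M * ‖J j f‖ * ‖g‖)) :
    ∃ Mt ≥ (0 : ℝ), ∀ f : ∀ i, V i,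
      |(∑ i, ∑ j, a i j (f j) (f i)).im| ≤
        Mt * Real.sqrt (∑ i, ‖f i‖ ^ 2) * Real.sqrt (∑ i, ‖J i (f i)‖ ^ 2) := by
  refine ⟨M * (m + m ^ 2), by positivity, fun f => ?_⟩
  set X := Real.sqrt (∑ i, ‖f i‖ ^ 2) with hXdef
  set Y := Real.sqrt (∑ i, ‖J i (f i)‖ ^ 2) with hYdef
  have hX0 : 0 ≤ X := Real.sqrt_nonneg _
  have hY0 : 0 ≤ Y := Real.sqrt_nonneg _
  have hx : ∀ i, ‖f i‖ ≤ X := fun i => by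
    rw [hXdef, ← Real.sqrt_sq (norm_nonneg (f i))]
    exact Real.sqrt_le_sqrt (by
      simpa using Finset.single_le_sum (f := fun j => ‖f j‖ ^ 2)
        (fun j _ => sq_nonneg _) (Finset.mem_univ i))
  have hy : ∀ i, ‖J i (f i)‖ ≤ Y := fun i => by
    rw [hYdef, ← Real.sqrt_sq (norm_nonneg (J i (f i)))]
    exact Real.sqrt_le_sqrt (by
      simpa using Finset.single_le_sum (f := fun j => ‖J j (f j)‖ ^ 2)
        (fun j _ => sq_nonneg _) (Finset.mem_univ i))
  -- each diagonal term is ≤ M * X * Y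
  have hdiag' : ∀ i, |(a i i (f i) (f i)).im| ≤ M * X * Y := fun i =>
    (hdiag i (f i)).trans (by
      have := mul_le_mul (mul_le_mul_of_nonneg_left (hx i) hM) (hy i) (norm_nonneg _)
        (by positivity)
      linarith)
  -- each symmetrized off-diagonal term (i < j) is ≤ M * X * Y
  have hoff' : ∀ i j : Fin m, i < j →
      |(a i j (f j) (f i) + a j i (f i) (f j)).im| ≤ M * X * Y := by
    intro i j hij
    rcases hoff with h | h
    · refine (h i j hij (f j) (f i)).trans ?_
      have := mul_le_mul (mul_le_mul_of_nonneg_left (hx j) hM) (hy i) (norm_nonneg _)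
        (by positivity)
      linarith
    · refine (h i j hij (f j) (f i)).trans ?_
      have := mul_le_mul (mul_le_mul_of_nonneg_left (hy j) hM) (hx i) (norm_nonneg _)
        (by positivity)
      nlinarith [mul_nonneg hM hY0]
  rw [my_sum_split (fun i j => a i j (f j) (f i))]
  simp only [Complex.add_im, Complex.im_sum]
  calc |(∑ i, (a i i (f i) (f i)).im) +
        (∑ i, ∑ j ∈ Ioi i, (a i j (f j) (f i) + a j i (f i) (f j)).im)| 
      ≤ |∑ i, (a i i (f i) (f i)).im| +
        |∑ i, ∑ j ∈ Ioi i, (a i j (f j) (f i) + a j i (f i) (f j)).im| := abs_add_le _ _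
    _ ≤ (∑ i, |(a i i (f i) (f i)).im|) +
        ∑ i, ∑ j ∈ Ioi i, |(a i j (f j) (f i) + a j i (f i) (f j)).im| := by
        gcongr
        · exact Finset.abs_sum_le_sum_abs _ _
        · exact (Finset.abs_sum_le_sum_abs _ _).trans (Finset.sum_le_sum fun i _ =>
            Finset.abs_sum_le_sum_abs _ _)
    _ ≤ (∑ _i : Fin m, M * X * Y) + ∑ _i : Fin m, ∑ _j : Fin m, M * X * Y := by
        gcongr with i _ i _
        · exact hdiag' i
        · calc ∑ j ∈ Ioi i, |(a i j (f j) (f i) + a j i (f i) (f j)).im|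
              ≤ ∑ j ∈ Ioi i, M * X * Y :=
                Finset.sum_le_sum fun j hj => hoff' i j (Finset.mem_Ioi.mp hj)
            _ ≤ ∑ _j : Fin m, M * X * Y := Finset.sum_le_sum_of_subset_of_nonneg
                (Finset.subset_univ _) (fun _ _ _ => by positivity)
    _ = M * (m + m ^ 2) * X * Y := by
        simp [Finset.sum_const, Finset.card_univ]
        ring
end

section
/- Let K ∈ M_m(ℂ) satisfy K² = K and K* = K, and let v_1,…,v_m be an orthonormal basis of ℂ^m, v_i = (v_{i1},…,v_{im}), with Kv_ℓ = v_ℓ for ℓ = 1,…,r and Kv_k = 0 for k = r+1,…,m. Define 𝒫 : ℋ → ℋ by (𝒫𝔣)_i = Σ_{j=1}^m K_{ij} f_j. Then the following are equivalent: (a) 𝔞(𝔤,𝔥) = 0 for all 𝔤 ∈ ker(I − 𝒫) ∩ 𝒱 and all 𝔥 ∈ ker 𝒫 ∩ 𝒱; (b) for all g_1,…,g_m ∈ V one has Σ_{i,j=1}^m Σ_{ℓ=1}^r Σ_{k=r+1}^m v_{ℓj} · conj(v_{ki}) · a_{ij}(g_ℓ, g_k) = 0. -/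
open Finset MeasureTheory

/-- A map `a : E → F → ℂ` is sesquilinear on the pair of submodules `(V, W)`:
linear in the first variable and antilinear in the second, for arguments in `V` and `W`. -/
def SesquiOnStmt14 {E F : Type*} [AddCommGroup E] [Module ℂ E] [AddCommGroup F] [Module ℂ F]
    (V : Submodule ℂ E) (W : Submodule ℂ F) (a : E → F → ℂ) : Prop :=
  (∀ f₁ ∈ V, ∀ f₂ ∈ V, ∀ g ∈ W, a (f₁ + f₂) g = a f₁ g + a f₂ g) ∧
  (∀ (c : ℂ), ∀ f ∈ V, ∀ g ∈ W, a (c • f) g = c * a f g) ∧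
  (∀ f ∈ V, ∀ g₁ ∈ W, ∀ g₂ ∈ W, a f (g₁ + g₂) = a f g₁ + a f g₂) ∧
  (∀ (c : ℂ), ∀ f ∈ V, ∀ g ∈ W, a f (c • g) = (starRingEnd ℂ) c * a f g)

section helpers
variable {E F : Type*} [AddCommGroup E] [Module ℂ E] [AddCommGroup F] [Module ℂ F]
  {V : Submodule ℂ E} {W : Submodule ℂ F} {a : E → F → ℂ}

lemma sesq_zero_left (h : SesquiOnStmt14 V W a) {g : F} (hg : g ∈ W) : a 0 g = 0 := by
  have := h.2.1 0 0 V.zero_mem g hg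
  simpa using this

lemma sesq_zero_right (h : SesquiOnStmt14 V W a) {f : E} (hf : f ∈ V) : a f 0 = 0 := by
  have := h.2.2.2 0 f hf 0 W.zero_mem
  simpa using this

lemma sesq_sum_left (h : SesquiOnStmt14 V W a) {ι : Type*} (S : Finset ι) (f : ι → E)
    (hf : ∀ i ∈ S, f i ∈ V) {g : F} (hg : g ∈ W) :
    a (∑ i ∈ S, f i) g = ∑ i ∈ S, a (f i) g := by
  classical
  revert hf
  induction S using Finset.induction_on with
  | empty => intro _; simpa using sesq_zero_left h hg
  | @insert x s hx ih =>
    intro hf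
    rw [Finset.sum_insert hx, Finset.sum_insert hx,
      h.1 _ (hf x (Finset.mem_insert_self x s)) _
        (Submodule.sum_mem V fun i hi => hf i (Finset.mem_insert_of_mem hi)) g hg,
      ih (fun i hi => hf i (Finset.mem_insert_of_mem hi))]

lemma sesq_sum_right (h : SesquiOnStmt14 V W a) {ι : Type*} (S : Finset ι) (q : ι → F)
    (hq : ∀ i ∈ S, q i ∈ W) {f : E} (hf : f ∈ V) :
    a f (∑ i ∈ S, q i) = ∑ i ∈ S, a f (q i) := by
  classical
  revert hq
  induction S using Finset.induction_on with
  | empty => intro _; simpa using sesq_zero_right h hf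
  | @insert x s hx ih =>
    intro hq
    rw [Finset.sum_insert hx, Finset.sum_insert hx,
      h.2.2.1 f hf _ (hq x (Finset.mem_insert_self x s)) _
        (Submodule.sum_mem W fun i hi => hq i (Finset.mem_insert_of_mem hi)),
      ih (fun i hi => hq i (Finset.mem_insert_of_mem hi))]

lemma sesq_expand (h : SesquiOnStmt14 V W a) {ι κ : Type*} (S : Finset ι) (T : Finset κ)
    (c : ι → ℂ) (p : ι → E) (d : κ → ℂ) (q : κ → F)
    (hp : ∀ i ∈ S, p i ∈ V) (hq : ∀ k ∈ T, q k ∈ W) :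
    a (∑ ℓ ∈ S, c ℓ • p ℓ) (∑ k ∈ T, d k • q k)
      = ∑ ℓ ∈ S, ∑ k ∈ T, c ℓ * (starRingEnd ℂ) (d k) * a (p ℓ) (q k) := by
  have hqm : (∑ k ∈ T, d k • q k) ∈ W :=
    Submodule.sum_mem W fun k hk => W.smul_mem _ (hq k hk)
  rw [sesq_sum_left h S _ (fun i hi => V.smul_mem _ (hp i hi)) hqm]
  refine Finset.sum_congr rfl fun ℓ hℓ => ?_
  rw [h.2.1 (c ℓ) (p ℓ) (hp ℓ hℓ) _ hqm,
    sesq_sum_right h T _ (fun k hk => W.smul_mem _ (hq k hk)) (hp ℓ hℓ),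
    Finset.mul_sum]
  refine Finset.sum_congr rfl fun k hk => ?_
  rw [h.2.2.2 (d k) (p ℓ) (hp ℓ hℓ) (q k) (hq k hk), mul_assoc]

end helpers

lemma swap_sum14 {M : Type*} [AddCommGroup M] [Module ℂ M] {n : Type*} [Fintype n]
    {ι : Type*} (S : Finset ι) (b : n → ℂ) (w : ι → n → ℂ) (f : ι → M) :
    (∑ j, b j • ∑ ℓ ∈ S, w ℓ j • f ℓ) = ∑ ℓ ∈ S, (∑ j, b j * w ℓ j) • f ℓ := by
  simp only [Finset.smul_sum, smul_smul]
  rw [Finset.sum_comm]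
  simp [Finset.sum_smul]

/-- Let `K` be an orthogonal projection matrix on `ℂ^m` with orthonormal
eigenbasis `v 0, …, v (m-1)`, the first `r` eigenvectors for eigenvalue `1` and the rest for
eigenvalue `0`, and let `𝒫` act on `ℋ = (L²)^m` by `(𝒫𝔣)_i = ∑_j K i j • f j`. Then
`𝔞(𝔤,𝔥) = 0` for all `𝔤 ∈ ker(I - 𝒫) ∩ 𝒱`, `𝔥 ∈ ker 𝒫 ∩ 𝒱` iff for all `g₁,…,g_m ∈ V`
one has `∑_{i,j} ∑_{ℓ<r} ∑_{k≥r} v ℓ j * conj (v k i) * a i j (g ℓ) (g k) = 0`. -/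
theorem stmt14 {m r : ℕ} (hm : 1 ≤ m) (hr1 : 1 ≤ r) (hrm : r ≤ m - 1)
    {X : Type*} [MeasurableSpace X] (μ : Measure X) [SigmaFinite μ]
    (V : Submodule ℂ (Lp ℂ 2 μ))
    (a : Fin m → Fin m → Lp ℂ 2 μ → Lp ℂ 2 μ → ℂ)
    (hses : ∀ i j, SesquiOnStmt14 V V (a i j))
    (K : Matrix (Fin m) (Fin m) ℂ) (hK2 : K * K = K) (hKH : K.conjTranspose = K)
    (v : Fin m → Fin m → ℂ)
    (hortho : ∀ i j : Fin m,
      (∑ s, (starRingEnd ℂ) (v i s) * v j s) = if i = j then 1 else 0)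
    (hv1 : ∀ ℓ : Fin m, (ℓ : ℕ) < r → K.mulVec (v ℓ) = v ℓ)
    (hv0 : ∀ k : Fin m, r ≤ (k : ℕ) → K.mulVec (v k) = 0) :
    (∀ g h : Fin m → Lp ℂ 2 μ, (∀ i, g i ∈ V) → (∀ i, h i ∈ V) →
        (∀ i, (∑ j, K i j • g j) = g i) → (∀ i, (∑ j, K i j • h j) = 0) →
        (∑ i, ∑ j, a i j (g j) (h i)) = 0) ↔
      (∀ g : Fin m → Lp ℂ 2 μ, (∀ i, g i ∈ V) →
        (∑ i, ∑ j, ∑ ℓ ∈ Finset.univ.filter (fun ℓ : Fin m => (ℓ : ℕ) < r),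
          ∑ k ∈ Finset.univ.filter (fun k : Fin m => r ≤ (k : ℕ)),
            v ℓ j * (starRingEnd ℂ) (v k i) * a i j (g ℓ) (g k)) = 0) := by
  classical
  set Sl : Finset (Fin m) := Finset.univ.filter (fun ℓ : Fin m => (ℓ : ℕ) < r) with hSl
  set Sr : Finset (Fin m) := Finset.univ.filter (fun k : Fin m => r ≤ (k : ℕ)) with hSr
  have hmv : ∀ (x : Fin m → ℂ) (i : Fin m), K.mulVec x i = ∑ s, K i s * x s := by
    intro x i; simp [Matrix.mulVec, dotProduct]
  constructor
  · -- (a) → (b)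
    intro hyp g hg
    set G : Fin m → Lp ℂ 2 μ := fun j => ∑ ℓ ∈ Sl, v ℓ j • g ℓ with hG
    set H : Fin m → Lp ℂ 2 μ := fun i => ∑ k ∈ Sr, v k i • g k with hH
    have hGV : ∀ i, G i ∈ V := fun i =>
      Submodule.sum_mem V fun ℓ _ => V.smul_mem _ (hg ℓ)
    have hHV : ∀ i, H i ∈ V := fun i =>
      Submodule.sum_mem V fun k _ => V.smul_mem _ (hg k)
    have hGfix : ∀ i, (∑ j, K i j • G j) = G i := by
      intro i
      rw [hG]
      rw [swap_sum14 Sl (fun j => K i j) (fun ℓ j => v ℓ j) g]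
      refine Finset.sum_congr rfl fun ℓ hℓ => ?_
      congr 1
      have hℓr : (ℓ : ℕ) < r := by
        rw [hSl] at hℓ; exact (Finset.mem_filter.mp hℓ).2
      have := congrFun (hv1 ℓ hℓr) i
      rw [hmv] at this
      exact this
    have hH0 : ∀ i, (∑ j, K i j • H j) = 0 := by
      intro i
      rw [hH]
      rw [swap_sum14 Sr (fun j => K i j) (fun k j => v k j) g]
      refine Finset.sum_eq_zero fun k hk => ?_
      have hkr : r ≤ (k : ℕ) := by
        rw [hSr] at hk; exact (Finset.mem_filter.mp hk).2
      have := congrFun (hv0 k hkr) i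
      rw [hmv] at this
      simp only [Pi.zero_apply] at this
      rw [this, zero_smul]
    have h0 := hyp G H hGV hHV hGfix hH0
    calc (∑ i, ∑ j, ∑ ℓ ∈ Sl, ∑ k ∈ Sr,
            v ℓ j * (starRingEnd ℂ) (v k i) * a i j (g ℓ) (g k))
        = ∑ i, ∑ j, a i j (G j) (H i) := by
          refine Finset.sum_congr rfl fun i _ => Finset.sum_congr rfl fun j _ => ?_
          rw [hG, hH,
            sesq_expand (hses i j) Sl Sr (fun ℓ => v ℓ j) g (fun k => v k i) g
              (fun ℓ _ => hg ℓ) (fun k _ => hg k)]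
      _ = 0 := h0
  · -- (b) → (a)
    intro hyp g h hgV hhV hgfix hh0
    -- completeness relation
    set A : Matrix (Fin m) (Fin m) ℂ := Matrix.of v with hA
    have hAAH : A * A.conjTranspose = 1 := by
      ext i j
      have h1 := congrArg (starRingEnd ℂ) (hortho i j)
      rw [map_sum] at h1
      simp only [map_mul, Complex.conj_conj] at h1
      simp only [Matrix.mul_apply, Matrix.conjTranspose_apply, Matrix.of_apply, hA,
        Matrix.one_apply, Complex.star_def]
      rw [h1]
      split_ifs <;> simp
    have hAHA : A.conjTranspose * A = 1 := mul_eq_one_comm.mp hAAH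
    have hcompl : ∀ j s : Fin m,
        (∑ i, v i j * (starRingEnd ℂ) (v i s)) = if j = s then 1 else 0 := by
      intro j s
      have h2 : (A.conjTranspose * A) s j = (1 : Matrix (Fin m) (Fin m) ℂ) s j := by
        rw [hAHA]
      simp only [Matrix.mul_apply, Matrix.conjTranspose_apply, Matrix.of_apply, hA,
        Matrix.one_apply, Complex.star_def] at h2
      calc (∑ i, v i j * (starRingEnd ℂ) (v i s))
          = ∑ i, (starRingEnd ℂ) (v i s) * v i j :=
            Finset.sum_congr rfl fun i _ => mul_comm _ _
        _ = if s = j then 1 else 0 := h2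
        _ = if j = s then 1 else 0 := by
            by_cases hsj : s = j
            · simp [hsj]
            · simp [hsj, Ne.symm hsj]
    -- coefficient functionals
    set c : Fin m → Lp ℂ 2 μ := fun i => ∑ s, (starRingEnd ℂ) (v i s) • g s with hc
    set d : Fin m → Lp ℂ 2 μ := fun i => ∑ s, (starRingEnd ℂ) (v i s) • h s with hd
    have hcV : ∀ i, c i ∈ V := fun i =>
      Submodule.sum_mem V fun s _ => V.smul_mem _ (hgV s)
    have hdV : ∀ i, d i ∈ V := fun i =>
      Submodule.sum_mem V fun s _ => V.smul_mem _ (hhV s)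
    have key : ∀ (f : Fin m → Lp ℂ 2 μ) (i : Fin m),
        (∑ s, (starRingEnd ℂ) (v i s) • (∑ t, K s t • f t))
          = ∑ t, (starRingEnd ℂ) (K.mulVec (v i) t) • f t := by
      intro f i
      rw [swap_sum14 Finset.univ (fun s => (starRingEnd ℂ) (v i s)) (fun t s => K s t) f]
      refine Finset.sum_congr rfl fun t _ => ?_
      congr 1
      rw [hmv, map_sum]
      refine Finset.sum_congr rfl fun s _ => ?_
      rw [map_mul]
      have hKst : (starRingEnd ℂ) (K t s) = K s t := by
        conv_rhs => rw [← hKH]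
        simp [Matrix.conjTranspose_apply]
      rw [hKst, mul_comm]
    have hc0 : ∀ i : Fin m, r ≤ (i : ℕ) → c i = 0 := by
      intro i hi
      have h1 : c i = ∑ s, (starRingEnd ℂ) (v i s) • (∑ t, K s t • g t) := by
        rw [hc]
        exact (Finset.sum_congr rfl fun s _ => by rw [hgfix s]).symm
      rw [h1, key g i, hv0 i hi]
      simp
    have hd0 : ∀ k : Fin m, (k : ℕ) < r → d k = 0 := by
      intro k hk
      have h1 := key h k
      rw [hv1 k hk] at h1
      have h2 : (∑ s, (starRingEnd ℂ) (v k s) • (∑ t, K s t • h t)) = 0 := by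
        refine Finset.sum_eq_zero fun s _ => ?_
        rw [hh0 s, smul_zero]
      have hdk : d k = ∑ t, (starRingEnd ℂ) (v k t) • h t := rfl
      rw [hdk, ← h1]
      exact h2
    -- representations
    have hnotlt : Finset.univ.filter (fun k : Fin m => ¬ (k : ℕ) < r) = Sr := by
      rw [hSr]; ext k; simp [not_lt]
    have hg_rep : ∀ j, g j = ∑ ℓ ∈ Sl, v ℓ j • c ℓ := by
      intro j
      have huniv : (∑ i, v i j • c i) = g j := by
        rw [hc, swap_sum14 Finset.univ (fun i => v i j)
          (fun s i => (starRingEnd ℂ) (v i s)) g]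
        rw [Finset.sum_congr rfl fun s _ => by rw [hcompl j s]]
        simp
      have hsplit := Finset.sum_filter_add_sum_filter_not Finset.univ
        (fun i : Fin m => (i : ℕ) < r) (fun i => v i j • c i)
      have hz : (∑ i ∈ Finset.univ.filter (fun i : Fin m => ¬ (i : ℕ) < r),
          v i j • c i) = 0 :=
        Finset.sum_eq_zero fun i hi => by
          rw [hc0 i (le_of_not_gt (Finset.mem_filter.mp hi).2), smul_zero]
      rw [← huniv, ← hsplit, hz, add_zero, hSl]
    have hh_rep : ∀ i, h i = ∑ k ∈ Sr, v k i • d k := by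
      intro i
      have huniv : (∑ k, v k i • d k) = h i := by
        rw [hd, swap_sum14 Finset.univ (fun k => v k i)
          (fun s k => (starRingEnd ℂ) (v k s)) h]
        rw [Finset.sum_congr rfl fun s _ => by rw [hcompl i s]]
        simp
      have hsplit := Finset.sum_filter_add_sum_filter_not Finset.univ
        (fun k : Fin m => (k : ℕ) < r) (fun k => v k i • d k)
      have hz : (∑ k ∈ Finset.univ.filter (fun k : Fin m => (k : ℕ) < r),
          v k i • d k) = 0 :=
        Finset.sum_eq_zero fun k hk => by
          rw [hd0 k (Finset.mem_filter.mp hk).2, smul_zero]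
      rw [← huniv, ← hsplit, hz, zero_add, hnotlt]
    -- combine
    set G : Fin m → Lp ℂ 2 μ := fun i => if (i : ℕ) < r then c i else d i with hGdef
    have hGV : ∀ i, G i ∈ V := by
      intro i; rw [hGdef]
      by_cases hi : (i : ℕ) < r <;> simp [hi, hcV i, hdV i]
    have hbig := hyp G hGV
    calc (∑ i, ∑ j, a i j (g j) (h i))
        = ∑ i, ∑ j, ∑ ℓ ∈ Sl, ∑ k ∈ Sr,
            v ℓ j * (starRingEnd ℂ) (v k i) * a i j (G ℓ) (G k) := by
          refine Finset.sum_congr rfl fun i _ => Finset.sum_congr rfl fun j _ => ?_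
          rw [hg_rep j, hh_rep i,
            sesq_expand (hses i j) Sl Sr (fun ℓ => v ℓ j) c (fun k => v k i) d
              (fun ℓ _ => hcV ℓ) (fun k _ => hdV k)]
          refine Finset.sum_congr rfl fun ℓ hℓ => Finset.sum_congr rfl fun k hk => ?_
          have hℓr : (ℓ : ℕ) < r := by
            rw [hSl] at hℓ; exact (Finset.mem_filter.mp hℓ).2
          have hkr : r ≤ (k : ℕ) := by
            rw [hSr] at hk; exact (Finset.mem_filter.mp hk).2
          simp [hGdef, hℓr, not_lt.mpr hkr]
      _ = 0 := hbig
end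

section
/- The following are equivalent: (A) for every 𝔣 ∈ 𝒱 one has Re 𝔣 ∈ 𝒱 (coordinatewise) and 𝔞(Re 𝔣, Im 𝔣) ∈ ℝ; (B) for every i = 1,…,m: f ∈ V_i implies Re f ∈ V_i, and a_{ii}(Re f, Im f) ∈ ℝ for all f ∈ V_i; and for all i ≠ j: a_{ij}(f,g) ∈ ℝ for all f ∈ V_j and g ∈ V_i that are real-valued almost everywhere. -/
open Finset MeasureTheory

/-- A map `a : E → F → ℂ` is sesquilinear on the pair of submodules `(V, W)`:
linear in the first variable and antilinear in the second, for arguments in `V` and `W`. -/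
def SesquiOnStmt17 {E F : Type*} [AddCommGroup E] [Module ℂ E] [AddCommGroup F] [Module ℂ F]
    (V : Submodule ℂ E) (W : Submodule ℂ F) (a : E → F → ℂ) : Prop :=
  (∀ f₁ ∈ V, ∀ f₂ ∈ V, ∀ g ∈ W, a (f₁ + f₂) g = a f₁ g + a f₂ g) ∧
  (∀ (c : ℂ), ∀ f ∈ V, ∀ g ∈ W, a (c • f) g = c * a f g) ∧
  (∀ f ∈ V, ∀ g₁ ∈ W, ∀ g₂ ∈ W, a f (g₁ + g₂) = a f g₁ + a f g₂) ∧
  (∀ (c : ℂ), ∀ f ∈ V, ∀ g ∈ W, a f (c • g) = (starRingEnd ℂ) c * a f g)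

/-- criterion for reality. The following are equivalent:
(A) for every `𝔣 ∈ 𝒱`, the coordinatewise real and imaginary parts `Re 𝔣`, `Im 𝔣` (as
complex-valued `L²` elements, described by their a.e. pointwise values) belong to `𝒱` and
`𝔞(Re 𝔣, Im 𝔣) ∈ ℝ`; (B) for every `i`, `f ∈ V i` implies `Re f ∈ V i` with
`a i i (Re f, Im f) ∈ ℝ`, and for all `i ≠ j`, `a i j (f, g) ∈ ℝ` whenever `f ∈ V j` and
`g ∈ V i` are real-valued a.e. -/
theorem stmt17 {m : ℕ} (hm : 1 ≤ m)
    {X : Fin m → Type*} [∀ i, MeasurableSpace (X i)]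
    (μ : ∀ i, Measure (X i)) [∀ i, SigmaFinite (μ i)]
    (V : ∀ i, Submodule ℂ (Lp ℂ 2 (μ i)))
    (a : ∀ i j : Fin m, Lp ℂ 2 (μ j) → Lp ℂ 2 (μ i) → ℂ)
    (hses : ∀ i j, SesquiOnStmt17 (V j) (V i) (a i j)) :
    (∀ f : ∀ i, Lp ℂ 2 (μ i), (∀ i, f i ∈ V i) →
        ∃ u w : ∀ i, Lp ℂ 2 (μ i),
          (∀ i, u i ∈ V i) ∧ (∀ i, w i ∈ V i) ∧
          (∀ i, ⇑(u i) =ᵐ[μ i] fun x => (((f i : X i → ℂ) x).re : ℂ)) ∧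
          (∀ i, ⇑(w i) =ᵐ[μ i] fun x => (((f i : X i → ℂ) x).im : ℂ)) ∧
          (∑ i, ∑ j, a i j (u j) (w i)).im = 0) ↔
      ((∀ i, ∀ f ∈ V i,
          ∃ u w : Lp ℂ 2 (μ i), u ∈ V i ∧ w ∈ V i ∧
            (⇑u =ᵐ[μ i] fun x => (((f : X i → ℂ) x).re : ℂ)) ∧
            (⇑w =ᵐ[μ i] fun x => (((f : X i → ℂ) x).im : ℂ)) ∧
            (a i i u w).im = 0) ∧
        (∀ i j, i ≠ j → ∀ f ∈ V j, ∀ g ∈ V i,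
          (⇑f =ᵐ[μ j] fun x => (((f : X j → ℂ) x).re : ℂ)) →
          (⇑g =ᵐ[μ i] fun x => (((g : X i → ℂ) x).re : ℂ)) →
          (a i j f g).im = 0)) := by
  -- zero lemmas
  have az1 : ∀ i j, ∀ g ∈ V i, a i j 0 g = 0 := by
    intro i j g hg
    have h := (hses i j).2.1 0 0 (V j).zero_mem g hg
    simpa using h
  have az2 : ∀ i j, ∀ f ∈ V j, a i j f 0 = 0 := by
    intro i j f hf
    have h := (hses i j).2.2.2 0 f hf 0 (V i).zero_mem
    simpa using h
  constructor
  · intro hA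
    constructor
    · -- diagonal
      intro i f hf
      classical
      set F : ∀ k, Lp ℂ 2 (μ k) := Function.update (fun k => (0 : Lp ℂ 2 (μ k))) i f with hFdef
      have hFi : F i = f := by simp [hFdef]
      have hFk : ∀ k, k ≠ i → F k = 0 := fun k hk => by simp [hFdef, Function.update_of_ne hk]
      have hF : ∀ k, F k ∈ V k := by
        intro k
        by_cases hk : k = i
        · subst hk; rw [hFi]; exact hf
        · rw [hFk k hk]; exact (V k).zero_mem
      obtain ⟨u, w, hu, hw, hure, hwim, hsum⟩ := hA F hF
      have hu0 : ∀ k, k ≠ i → u k = 0 := by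
        intro k hk
        apply Lp.ext ((hure k).trans ?_)
        have h0 : ⇑(F k) =ᵐ[μ k] 0 := by rw [hFk k hk]; exact Lp.coeFn_zero ℂ 2 (μ k)
        filter_upwards [h0, Lp.coeFn_zero ℂ 2 (μ k)] with x hx hx0
        rw [hx0]; simp [hx]
      have hw0 : ∀ k, k ≠ i → w k = 0 := by
        intro k hk
        apply Lp.ext ((hwim k).trans ?_)
        have h0 : ⇑(F k) =ᵐ[μ k] 0 := by rw [hFk k hk]; exact Lp.coeFn_zero ℂ 2 (μ k)
        filter_upwards [h0, Lp.coeFn_zero ℂ 2 (μ k)] with x hx hx0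
        rw [hx0]; simp [hx]
      have hred : ∑ i', ∑ j', a i' j' (u j') (w i') = a i i (u i) (w i) := by
        rw [Finset.sum_eq_single i]
        · rw [Finset.sum_eq_single i]
          · intro j' _ hj'; rw [hu0 j' hj']; exact az1 i j' (w i) (hw i)
          · intro h; exact absurd (Finset.mem_univ i) h
        · intro i' _ hi'
          apply Finset.sum_eq_zero
          intro j' _
          rw [hw0 i' hi']; exact az2 i' j' (u j') (hu j')
        · intro h; exact absurd (Finset.mem_univ i) h
      rw [hred] at hsum
      refine ⟨u i, w i, hu i, hw i, ?_, ?_, hsum⟩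
      · have := hure i; rwa [hFi] at this
      · have := hwim i; rwa [hFi] at this
    · -- off-diagonal
      intro i j hij f hf g hg hfre hgre
      classical
      set F : ∀ k, Lp ℂ 2 (μ k) :=
        Function.update (Function.update (fun k => (0 : Lp ℂ 2 (μ k))) j f) i (Complex.I • g)
        with hFdef
      have hFi : F i = Complex.I • g := Function.update_self i _ _
      have hFj : F j = f := by
        rw [hFdef, Function.update_of_ne hij.symm, Function.update_self]
      have hFk : ∀ k, k ≠ i → k ≠ j → F k = 0 := fun k hki hkj => by
        rw [hFdef, Function.update_of_ne hki, Function.update_of_ne hkj]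
      have hF : ∀ k, F k ∈ V k := by
        intro k
        by_cases hki : k = i
        · subst hki; rw [hFi]; exact (V k).smul_mem _ hg
        · by_cases hkj : k = j
          · subst hkj; rw [hFj]; exact hf
          · rw [hFk k hki hkj]; exact (V k).zero_mem
      obtain ⟨u, w, hu, hw, hure, hwim, hsum⟩ := hA F hF
      -- g, f are real-valued a.e.
      have hgim : ∀ᵐ x ∂(μ i), ((g : X i → ℂ) x).im = 0 := by
        filter_upwards [hgre] with x hx
        rw [hx]; simp
      have hfim : ∀ᵐ x ∂(μ j), ((f : X j → ℂ) x).im = 0 := by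
        filter_upwards [hfre] with x hx
        rw [hx]; simp
      -- identify u and w
      have huj : u j = f := by
        apply Lp.ext ((hure j).trans ?_)
        have hc : ⇑(F j) =ᵐ[μ j] ⇑f := by rw [hFj]
        filter_upwards [hc, hfre] with x hx hx2
        rw [hx, ← hx2]
      have hwi : w i = g := by
        apply Lp.ext ((hwim i).trans ?_)
        have hc : ⇑(F i) =ᵐ[μ i] Complex.I • ⇑g := by
          rw [hFi]; exact Lp.coeFn_smul Complex.I g
        filter_upwards [hc, hgre] with x hx hx2
        rw [hx]
        simp only [Pi.smul_apply, smul_eq_mul, Complex.mul_im, Complex.I_re, Complex.I_im]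
        rw [hx2]; simp
      have hu0 : ∀ k, k ≠ j → u k = 0 := by
        intro k hk
        apply Lp.ext ((hure k).trans ?_)
        by_cases hki : k = i
        · subst hki
          have hc : ⇑(F k) =ᵐ[μ k] Complex.I • ⇑g := by
            rw [hFi]; exact Lp.coeFn_smul Complex.I g
          filter_upwards [hc, hgim, Lp.coeFn_zero ℂ 2 (μ k)] with x hx hx2 hx0
          rw [hx0]
          simp only [hx, Pi.smul_apply, smul_eq_mul, Complex.mul_re, Complex.I_re, Complex.I_im,
            Pi.zero_apply]
          rw [hx2]; simp
        · have h0 : ⇑(F k) =ᵐ[μ k] 0 := by rw [hFk k hki hk]; exact Lp.coeFn_zero ℂ 2 (μ k)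
          filter_upwards [h0, Lp.coeFn_zero ℂ 2 (μ k)] with x hx hx0
          rw [hx0]; simp [hx]
      have hw0 : ∀ k, k ≠ i → w k = 0 := by
        intro k hk
        apply Lp.ext ((hwim k).trans ?_)
        by_cases hkj : k = j
        · subst hkj
          have hc : ⇑(F k) =ᵐ[μ k] ⇑f := by rw [hFj]
          filter_upwards [hc, hfim, Lp.coeFn_zero ℂ 2 (μ k)] with x hx hx2 hx0
          rw [hx0, hx, hx2]; simp
        · have h0 : ⇑(F k) =ᵐ[μ k] 0 := by rw [hFk k hk hkj]; exact Lp.coeFn_zero ℂ 2 (μ k)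
          filter_upwards [h0, Lp.coeFn_zero ℂ 2 (μ k)] with x hx hx0
          rw [hx0]; simp [hx]
      have hred : ∑ i', ∑ j', a i' j' (u j') (w i') = a i j (u j) (w i) := by
        rw [Finset.sum_eq_single i]
        · rw [Finset.sum_eq_single j]
          · intro j' _ hj'; rw [hu0 j' hj']; exact az1 i j' (w i) (hw i)
          · intro h; exact absurd (Finset.mem_univ j) h
        · intro i' _ hi'
          apply Finset.sum_eq_zero
          intro j' _
          rw [hw0 i' hi']; exact az2 i' j' (u j') (hu j')
        · intro h; exact absurd (Finset.mem_univ i) h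
      rw [hred, huj, hwi] at hsum
      exact hsum
  · rintro ⟨hdiag, hoff⟩ f hf
    choose u w hu hw hure hwim hdre using fun i => hdiag i (f i) (hf i)
    refine ⟨u, w, hu, hw, hure, hwim, ?_⟩
    rw [Complex.im_sum]
    apply Finset.sum_eq_zero
    intro i _
    rw [Complex.im_sum]
    apply Finset.sum_eq_zero
    intro j _
    by_cases hij : i = j
    · subst hij; exact hdre i
    · apply hoff i j hij (u j) (hu j) (w i) (hw i)
      · filter_upwards [hure j] with x hx
        rw [hx]; simp
      · filter_upwards [hwim i] with x hx
        rw [hx]; simp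
end

section
/- Assume 𝔞 is accretive (Re 𝔞(𝔣,𝔣) ≥ 0 for all 𝔣 ∈ 𝒱). Then the following are equivalent: (A) for every 𝔣 ∈ 𝒱 one has (1∧|𝔣|)sign 𝔣 ∈ 𝒱 (coordinatewise), and Re 𝔞((1∧|𝔣|)sign 𝔣, (|𝔣|−1)⁺ sign 𝔣) ≥ 0; (B) for every i = 1,…,m: (i) f ∈ V_i implies (1∧|f|)sign f ∈ V_i, and (ii) for every 𝔣 ∈ 𝒱 ∩ 𝒞_i^∞ one has Σ_{j≠i} |a_{ij}(f_j, (|f_i|−1)⁺ sign f_i)| ≤ Re a_{ii}((1∧|f_i|)sign f_i, (|f_i|−1)⁺ sign f_i). -/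
open Finset MeasureTheory

/-- A map `a : E → F → ℂ` is sesquilinear on the pair of submodules `(V, W)`:
linear in the first variable and antilinear in the second, for arguments in `V` and `W`. -/
def SesquiOnStmt19 {E F : Type*} [AddCommGroup E] [Module ℂ E] [AddCommGroup F] [Module ℂ F]
    (V : Submodule ℂ E) (W : Submodule ℂ F) (a : E → F → ℂ) : Prop :=
  (∀ f₁ ∈ V, ∀ f₂ ∈ V, ∀ g ∈ W, a (f₁ + f₂) g = a f₁ g + a f₂ g) ∧
  (∀ (c : ℂ), ∀ f ∈ V, ∀ g ∈ W, a (c • f) g = c * a f g) ∧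
  (∀ f ∈ V, ∀ g₁ ∈ W, ∀ g₂ ∈ W, a f (g₁ + g₂) = a f g₁ + a f g₂) ∧
  (∀ (c : ℂ), ∀ f ∈ V, ∀ g ∈ W, a f (c • g) = (starRingEnd ℂ) c * a f g)

/-- The generalized (complex-valued) sign: `sign z = z / |z|` if `z ≠ 0`, and `0` otherwise. -/
noncomputable def csignStmt19 (z : ℂ) : ℂ :=
  if z = 0 then 0 else z / (‖z‖ : ℂ)

/-- The pointwise truncation `(1 ∧ |f|) sign f`. -/
noncomputable def truncStmt19 {α : Type*} (f : α → ℂ) : α → ℂ :=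
  fun x => ((min 1 (‖f x‖) : ℝ) : ℂ) * csignStmt19 (f x)

/-- The pointwise excess part `(|f| - 1)⁺ sign f`. -/
noncomputable def excessStmt19 {α : Type*} (f : α → ℂ) : α → ℂ :=
  fun x => ((max (‖f x‖ - 1) 0 : ℝ) : ℂ) * csignStmt19 (f x)

lemma s19_abs_mul_csign (z : ℂ) : (‖z‖ : ℂ) * csignStmt19 z = z := by
  unfold csignStmt19
  split_ifs with h
  · simp [h]
  · have : (‖z‖ : ℂ) ≠ 0 := by
      simpa using (norm_ne_zero_iff.mpr h)
    field_simp

lemma s19_trunc_add_excess {α : Type*} (f : α → ℂ) (x : α) :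
    truncStmt19 f x + excessStmt19 f x = f x := by
  unfold truncStmt19 excessStmt19
  rw [← add_mul, ← Complex.ofReal_add]
  have h : min 1 (‖f x‖) + max (‖f x‖ - 1) 0 = ‖f x‖ := by
    rcases le_total (‖f x‖) 1 with h | h
    · rw [min_eq_right h, max_eq_right (by linarith)]; ring
    · rw [min_eq_left h, max_eq_left (by linarith)]; ring
  rw [h, s19_abs_mul_csign]

lemma s19_abs_csign_le (z : ℂ) : ‖csignStmt19 z‖ ≤ 1 := by
  unfold csignStmt19
  split_ifs with h
  · simp
  · have hz : ‖z‖ ≠ 0 := norm_ne_zero_iff.mpr h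
    simp [norm_div, Complex.norm_real, Real.norm_eq_abs, abs_of_nonneg (norm_nonneg z),
      div_self hz]

lemma s19_abs_trunc_le {α : Type*} (f : α → ℂ) (x : α) :
    ‖truncStmt19 f x‖ ≤ 1 := by
  unfold truncStmt19
  rw [norm_mul]
  calc ‖((min 1 (‖f x‖) : ℝ) : ℂ)‖ * ‖csignStmt19 (f x)‖
      ≤ 1 * 1 := by
        apply mul_le_mul _ (s19_abs_csign_le _) (norm_nonneg _) zero_le_one
        rw [Complex.norm_real, Real.norm_eq_abs, abs_of_nonneg (le_min zero_le_one (norm_nonneg _))]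
        exact min_le_left _ _
    _ = 1 := one_mul 1

lemma s19_trunc_of_le {α : Type*} (f : α → ℂ) (x : α) (h : ‖f x‖ ≤ 1) :
    truncStmt19 f x = f x := by
  unfold truncStmt19
  rw [min_eq_right h, s19_abs_mul_csign]

lemma s19_excess_of_le {α : Type*} (f : α → ℂ) (x : α) (h : ‖f x‖ ≤ 1) :
    excessStmt19 f x = 0 := by
  unfold excessStmt19
  rw [max_eq_right (by linarith)]
  simp

/-- criterion for `L^∞`-contractivity. Assume the form matrix `𝔞` is
accretive. The following are equivalent: (A) for every `𝔣 ∈ 𝒱`, the coordinatewise truncation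
`(1 ∧ |𝔣|) sign 𝔣` and excess `(|𝔣| - 1)⁺ sign 𝔣` (as `L²` elements described by their a.e.
pointwise values) belong to `𝒱`, and `Re 𝔞((1 ∧ |𝔣|) sign 𝔣, (|𝔣| - 1)⁺ sign 𝔣) ≥ 0`;
(B) for every `i`: (i) `f ∈ V i` implies `(1 ∧ |f|) sign f ∈ V i`, and (ii) for every
`𝔣 ∈ 𝒱 ∩ 𝒞_i^∞` one has
`∑_{j ≠ i} |a i j (f j, (|f i| - 1)⁺ sign f i)| ≤ Re a i i ((1 ∧ |f i|) sign f i, (|f i| - 1)⁺ sign f i)`. -/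
theorem stmt19 {m : ℕ} (hm : 1 ≤ m)
    {X : Fin m → Type*} [∀ i, MeasurableSpace (X i)]
    (μ : ∀ i, Measure (X i)) [∀ i, SigmaFinite (μ i)]
    (V : ∀ i, Submodule ℂ (Lp ℂ 2 (μ i)))
    (a : ∀ i j : Fin m, Lp ℂ 2 (μ j) → Lp ℂ 2 (μ i) → ℂ)
    (hses : ∀ i j, SesquiOnStmt19 (V j) (V i) (a i j))
    (hacc : ∀ f : ∀ i, Lp ℂ 2 (μ i), (∀ i, f i ∈ V i) →
      0 ≤ (∑ i, ∑ j, a i j (f j) (f i)).re) :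
    (∀ f : ∀ i, Lp ℂ 2 (μ i), (∀ i, f i ∈ V i) →
        ∃ t u : ∀ i, Lp ℂ 2 (μ i),
          (∀ i, t i ∈ V i) ∧ (∀ i, u i ∈ V i) ∧
          (∀ i, ⇑(t i) =ᵐ[μ i] truncStmt19 (f i : X i → ℂ)) ∧
          (∀ i, ⇑(u i) =ᵐ[μ i] excessStmt19 (f i : X i → ℂ)) ∧
          0 ≤ (∑ i, ∑ j, a i j (t j) (u i)).re) ↔
      (∀ i : Fin m,
        (∀ f ∈ V i, ∃ t ∈ V i, ⇑t =ᵐ[μ i] truncStmt19 (f : X i → ℂ)) ∧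
        (∀ f : ∀ k, Lp ℂ 2 (μ k), (∀ k, f k ∈ V k) →
          (∀ j, j ≠ i → ∀ᵐ x ∂(μ j), ‖(f j : X j → ℂ) x‖ ≤ 1) →
          ∀ t u : Lp ℂ 2 (μ i), t ∈ V i → u ∈ V i →
            (⇑t =ᵐ[μ i] truncStmt19 (f i : X i → ℂ)) →
            (⇑u =ᵐ[μ i] excessStmt19 (f i : X i → ℂ)) →
            (∑ j ∈ Finset.univ.erase i, ‖a i j (f j) u‖) ≤
              (a i i t u).re)) := by
  classical
  constructor
  · -- (A) → (B)
    intro hA i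
    constructor
    · -- (i)
      intro f hf
      have hFmem : ∀ k, Function.update (fun k => (0 : Lp ℂ 2 (μ k))) i f k ∈ V k := by
        intro k
        by_cases hk : k = i
        · subst hk; simpa using hf
        · simp only [Function.update_of_ne hk]; exact (V k).zero_mem
      obtain ⟨t, u, ht, hu, htae, huae, _⟩ := hA _ hFmem
      refine ⟨t i, ht i, ?_⟩
      simpa [Function.update_self] using htae i
    · -- (ii)
      intro f hf hbd t u ht hu htae huae
      set c : Fin m → ℂ := fun j => a i j (f j) u with hc
      set α : Fin m → ℂ := fun j => if c j = 0 then 1 else -(‖c j‖ : ℂ) / c j with hα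
      have hαmul : ∀ j, α j * c j = -((‖c j‖ : ℝ) : ℂ) := by
        intro j
        by_cases h : c j = 0
        · simp [hα, h]
        · simp only [hα, if_neg h]
          field_simp
      have hαabs : ∀ j, ‖α j‖ = 1 := by
        intro j
        by_cases h : c j = 0
        · simp [hα, h]
        · have hcne : ‖c j‖ ≠ 0 := norm_ne_zero_iff.mpr h
          simp only [hα, if_neg h]
          rw [norm_div, norm_neg, Complex.norm_real, Real.norm_eq_abs,
            abs_of_nonneg (norm_nonneg _), div_self hcne]
      set g : ∀ k, Lp ℂ 2 (μ k) := Function.update (fun k => α k • f k) i (f i) with hg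
      have hgmem : ∀ k, g k ∈ V k := by
        intro k
        by_cases hk : k = i
        · subst hk; simpa [hg, Function.update_self] using hf k
        · simp only [hg, Function.update_of_ne hk]
          exact (V k).smul_mem (α k) (hf k)
      obtain ⟨t', u', ht', hu', ht'ae, hu'ae, hpos⟩ := hA g hgmem
      have hgi : g i = f i := by rw [hg]; simp
      have ht'i : t' i = t := by
        apply Lp.ext
        have h1 := ht'ae i
        rw [hgi] at h1
        exact h1.trans htae.symm
      have hu'i : u' i = u := by
        apply Lp.ext
        have h1 := hu'ae i
        rw [hgi] at h1
        exact h1.trans huae.symm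
      have hgj : ∀ j, j ≠ i → ⇑(g j) =ᵐ[μ j] α j • ⇑(f j) := by
        intro j hj
        rw [hg, Function.update_of_ne hj]
        exact Lp.coeFn_smul _ _
      have ht'j : ∀ j, j ≠ i → t' j = α j • f j := by
        intro j hj
        apply Lp.ext
        refine (ht'ae j).trans (Filter.EventuallyEq.trans ?_ (Lp.coeFn_smul (α j) (f j)).symm)
        filter_upwards [hgj j hj, hbd j hj] with x hx hbx
        have habs : ‖(g j : X j → ℂ) x‖ ≤ 1 := by
          rw [hx]
          simp only [Pi.smul_apply, smul_eq_mul, norm_mul, hαabs j, one_mul]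
          exact hbx
        rw [s19_trunc_of_le _ x habs, hx]
      have hu'j : ∀ j, j ≠ i → u' j = 0 := by
        intro j hj
        apply Lp.ext
        refine (hu'ae j).trans (Filter.EventuallyEq.trans ?_ (Lp.coeFn_zero ℂ 2 (μ j)).symm)
        filter_upwards [hgj j hj, hbd j hj] with x hx hbx
        have habs : ‖(g j : X j → ℂ) x‖ ≤ 1 := by
          rw [hx]
          simp only [Pi.smul_apply, smul_eq_mul, norm_mul, hαabs j, one_mul]
          exact hbx
        rw [s19_excess_of_le _ x habs]
        simp
      have hzero : ∀ i' j, a i' j (t' j) (0 : Lp ℂ 2 (μ i')) = 0 := by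
        intro i' j
        have h0 : (0 : Lp ℂ 2 (μ i')) = (0 : ℂ) • (0 : Lp ℂ 2 (μ i')) := (zero_smul _ _).symm
        rw [h0, (hses i' j).2.2.2 0 (t' j) (ht' j) 0 (V i').zero_mem]
        simp
      have hsum : (∑ i', ∑ j, a i' j (t' j) (u' i')) = ∑ j, a i j (t' j) u := by
        rw [Finset.sum_eq_single i]
        · rw [hu'i]
        · intro i' _ hi'
          rw [hu'j i' hi']
          exact Finset.sum_eq_zero fun j _ => hzero i' j
        · intro h; exact absurd (Finset.mem_univ i) h
      have hsplit : ∑ j, a i j (t' j) u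
          = a i i t u + ∑ j ∈ Finset.univ.erase i, -((‖c j‖ : ℝ) : ℂ) := by
        rw [← Finset.add_sum_erase _ _ (Finset.mem_univ i), ht'i]
        congr 1
        refine Finset.sum_congr rfl fun j hj => ?_
        have hj' : j ≠ i := (Finset.mem_erase.mp hj).1
        rw [ht'j j hj', (hses i j).2.1 (α j) (f j) (hf j) u hu]
        exact hαmul j
      rw [hsum, hsplit] at hpos
      have hre : (a i i t u + ∑ j ∈ Finset.univ.erase i, -((‖c j‖ : ℝ) : ℂ)).re
          = (a i i t u).re - ∑ j ∈ Finset.univ.erase i, ‖c j‖ := by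
        rw [Complex.add_re, Complex.re_sum]
        simp [sub_eq_add_neg]
      rw [hre] at hpos
      have : ∑ j ∈ Finset.univ.erase i, ‖c j‖ ≤ (a i i t u).re := by linarith
      simpa [hc] using this
  · -- (B) → (A)
    intro hB f hf
    choose t htV htae using fun k => (hB k).1 (f k) (hf k)
    refine ⟨t, fun k => f k - t k, htV, fun k => (V k).sub_mem (hf k) (htV k), htae, ?_, ?_⟩
    · intro k
      refine (Lp.coeFn_sub (f k) (t k)).trans ?_
      filter_upwards [htae k] with x hx
      simp only [Pi.sub_apply]
      rw [hx, ← s19_trunc_add_excess (⇑(f k)) x]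
      ring
    · have key : ∀ i, ∑ j ∈ Finset.univ.erase i, ‖a i j (t j) (f i - t i)‖
          ≤ (a i i (t i) (f i - t i)).re := by
        intro i
        have hbd : ∀ j, j ≠ i →
            ∀ᵐ x ∂(μ j), ‖(Function.update t i (f i) j : X j → ℂ) x‖ ≤ 1 := by
          intro j hj
          rw [Function.update_of_ne hj]
          filter_upwards [htae j] with x hx
          rw [hx]
          exact s19_abs_trunc_le _ x
        have hmem : ∀ k, Function.update t i (f i) k ∈ V k := by
          intro k
          by_cases hk : k = i
          · subst hk; simpa [Function.update_self] using hf k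
          · rw [Function.update_of_ne hk]; exact htV k
        have huik : ⇑(f i - t i) =ᵐ[μ i] excessStmt19 (⇑(f i)) := by
          refine (Lp.coeFn_sub (f i) (t i)).trans ?_
          filter_upwards [htae i] with x hx
          simp only [Pi.sub_apply]
          rw [hx, ← s19_trunc_add_excess (⇑(f i)) x]
          ring
        have := (hB i).2 (Function.update t i (f i)) hmem hbd (t i) (f i - t i) (htV i)
          ((V i).sub_mem (hf i) (htV i))
          (by rw [Function.update_self]; exact htae i)
          (by rw [Function.update_self]; exact huik)
        refine le_trans (le_of_eq ?_) this
        refine Finset.sum_congr rfl fun j hj => ?_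
        rw [Function.update_of_ne (Finset.mem_erase.mp hj).1]
      rw [Complex.re_sum]
      refine Finset.sum_nonneg fun i _ => ?_
      rw [Complex.re_sum, ← Finset.add_sum_erase _ _ (Finset.mem_univ i)]
      have h2 : ∀ j ∈ Finset.univ.erase i,
          -(‖a i j (t j) (f i - t i)‖) ≤ (a i j (t j) (f i - t i)).re :=
        fun j _ => (abs_le.mp (Complex.abs_re_le_norm _)).1
      have h3 := Finset.sum_le_sum h2
      rw [Finset.sum_neg_distrib] at h3
      have h1 := key i
      linarith
end
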